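/- Let η(y) = (1/√(2π)) e^{−y²/2} be the standard Gaussian density and let H_j denote the j-th Hermite polynomial defined by η^{(j)}(y) = (−1)^j H_j(y) η(y). Define coefficients c_{j,m} recursively by c_{1,1} = −1 and, for m ≥ 2 and 1 ≤ j ≤ m, c_{j,m} = (2j/(m−1) − 4) c_{j,m−1} · 1_{j<m} + (2/(m−1)) c_{j−1,m−1} · 1_{j>1}. Then for every m ≥ 1 and every real y, y^{2m} = ∑_{j=1}^{m} (−1)^{m+j} (c_{j,m}/c_{m,m}) y^j H_j(y). -/

import Mathlib

/-- The coefficients `c_{j,m}` (here `ccoef m j`), defined by `c_{1,1} = -1` and, for `m ≥ 2`,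
`c_{j,m} = (2j/(m-1) - 4) c_{j,m-1} 1_{j<m} + (2/(m-1)) c_{j-1,m-1} 1_{j>1}`. -/
noncomputable def ccoef : ℕ → ℕ → ℝ
  | 0, _ => 0
  | 1, j => if j = 1 then -1 else 0
  | (m + 2), j =>
      (if j < m + 2 then (2 * (j : ℝ) / ((m : ℝ) + 1) - 4) * ccoef (m + 1) j else 0) +
      (if 1 < j then (2 / ((m : ℝ) + 1)) * ccoef (m + 1) (j - 1) else 0)

/-- The standard Gaussian density `η(y) = (1/√(2π)) e^{-y²/2}`. -/
noncomputable def gaussDensity (y : ℝ) : ℝ :=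
  (Real.sqrt (2 * Real.pi))⁻¹ * Real.exp (-y ^ 2 / 2)

open Polynomial Finset

/- ### Hermite polynomial facts -/

noncomputable def Heval (n : ℕ) (y : ℝ) : ℝ := Polynomial.aeval y (Polynomial.hermite n)

lemma hermite_deriv (n : ℕ) :
    derivative (hermite (n+1)) = (C ((n:ℤ)+1)) * hermite n := by
  induction n with
  | zero => simp [hermite_one]
  | succ n ih =>
      rw [hermite_succ (n+1), derivative_sub, derivative_mul, derivative_X, one_mul, ih]
      rw [derivative_mul, derivative_C, zero_mul, zero_add]
      rw [hermite_succ n]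
      have hC : (C ((n:ℤ) + 1 + 1) : ℤ[X]) = C ((n:ℤ)+1) + 1 := by
        rw [← C_1, ← C_add]
      push_cast
      rw [hC]
      ring

lemma Heval_rec (n : ℕ) (y : ℝ) :
    y * Heval (n+1) y = Heval (n+2) y + ((n:ℝ)+1) * Heval n y := by
  have h := hermite_succ (n+1)
  rw [hermite_deriv n] at h
  have := congrArg (Polynomial.aeval y) h
  simp only [map_sub, map_mul, aeval_X, aeval_C] at this
  simp only [Heval, this]
  push_cast
  ring

lemma Heval_one (y : ℝ) : Heval 1 y = y := by simp [Heval, hermite_one]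

lemma Heval_zero (y : ℝ) : Heval 0 y = 1 := by simp [Heval, hermite_zero]

lemma gaussDensity_pos (y : ℝ) : 0 < gaussDensity y := by
  have : 0 < Real.sqrt (2 * Real.pi) := Real.sqrt_pos.2 (by positivity)
  exact mul_pos (inv_pos.2 this) (Real.exp_pos _)

lemma iterDeriv_cmul (c : ℝ) : ∀ (n : ℕ) (f : ℝ → ℝ),
    deriv^[n] (fun x => c * f x) = fun x => c * deriv^[n] f x
  | 0, f => rfl
  | n+1, f => by
      rw [Function.iterate_succ_apply, Function.iterate_succ_apply]
      rw [show deriv (fun x => c * f x) = fun x => c * deriv f x from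
        funext fun x => deriv_const_mul_field c]
      exact iterDeriv_cmul c n (deriv f)

lemma H_eq (H : ℕ → ℝ → ℝ)
    (hH : ∀ (j : ℕ) (y : ℝ),
      iteratedDeriv j gaussDensity y = (-1 : ℝ) ^ j * H j y * gaussDensity y)
    (j : ℕ) (y : ℝ) : H j y = Heval j y := by
  have hg : gaussDensity = fun x => (Real.sqrt (2 * Real.pi))⁻¹ * Real.exp (-(x ^ 2 / 2)) := by
    funext x; simp [gaussDensity, neg_div]
  have h1 : iteratedDeriv j gaussDensity y
      = (Real.sqrt (2 * Real.pi))⁻¹ * deriv^[j] (fun x : ℝ => Real.exp (-(x ^ 2 / 2))) y := by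
    rw [iteratedDeriv_eq_iterate, hg, iterDeriv_cmul]
  rw [Polynomial.deriv_gaussian_eq_hermite_mul_gaussian] at h1
  rw [hH j y] at h1
  have h2 : ((-1 : ℝ) ^ j * H j y) * gaussDensity y = ((-1:ℝ)^j * Heval j y) * gaussDensity y := by
    rw [← mul_assoc] at h1
    rw [h1, Heval, gaussDensity, neg_div]
    ring
  have h3 := mul_right_cancel₀ (ne_of_gt (gaussDensity_pos y)) h2
  have h4 : ((-1:ℝ)^j) ≠ 0 := by simp
  exact mul_left_cancel₀ h4 h3

/- ### The explicit coefficients -/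

/-- Explicit coefficients `a_{j,m} = (2m-j-1)! / (2^{m-j} (m-j)! (j-1)!)`. -/
noncomputable def A (j m : ℕ) : ℝ :=
  ((2*m - j - 1).factorial : ℝ) / (2^(m-j) * ((m-j).factorial : ℝ) * ((j-1).factorial : ℝ))

lemma A_diag (m : ℕ) : A (m+1) (m+1) = 1 := by
  have h1 : 2*(m+1) - (m+1) - 1 = m := by omega
  have h2 : (m+1) - (m+1) = 0 := by omega
  have h3 : (m+1) - 1 = m := by omega
  rw [A, h1, h2, h3]
  simp [Nat.factorial_ne_zero]

lemma A_one_one : A 1 1 = 1 := A_diag 0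

lemma A_rec1 (m : ℕ) : A 1 (m+2) = (2*(m:ℝ)+1) * A 1 (m+1) := by
  have h1 : 2*(m+2) - 1 - 1 = (2*m+1) + 1 := by omega
  have h2 : (m+2) - 1 = m + 1 := by omega
  have h3 : 2*(m+1) - 1 - 1 = 2*m := by omega
  have h4 : (m+1) - 1 = m := by omega
  rw [A, A, h1, h2, h3, h4, Nat.factorial_succ (2*m+1), Nat.factorial_succ (2*m),
    Nat.factorial_succ m]
  push_cast
  field_simp [Nat.factorial_ne_zero]
  ring

lemma A_rec (j m : ℕ) (h1 : 2 ≤ j) (h2 : j ≤ m) :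
    A j (m+1) = A (j-1) m + (2*(m:ℝ) - j) * A j m := by
  obtain ⟨s, rfl⟩ : ∃ s, j = s + 2 := ⟨j - 2, by omega⟩
  obtain ⟨t, rfl⟩ : ∃ t, m = s + t + 2 := ⟨m - s - 2, by omega⟩
  have e1 : 2*(s+t+2+1) - (s+2) - 1 = (s+2*t+2) + 1 := by omega
  have e2 : (s+t+2+1) - (s+2) = t + 1 := by omega
  have e3 : (s+2) - 1 = s + 1 := by omega
  have e4 : (s+2) - 2 = s := by omega
  have e5 : 2*(s+t+2) - (s+1) - 1 = (s+2*t+1) + 1 := by omega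
  have e6 : (s+t+2) - (s+1) = t + 1 := by omega
  have e7 : (s+1) - 1 = s := by omega
  have e8 : 2*(s+t+2) - (s+2) - 1 = s+2*t+1 := by omega
  have e9 : (s+t+2) - (s+2) = t := by omega
  rw [show (s+2) - 1 = s+1 by omega]
  rw [A, A, A, e1, e2, e3, e5, e6, e7, e8, e9]
  rw [Nat.factorial_succ (s+2*t+2), Nat.factorial_succ (s+2*t+1), Nat.factorial_succ s,
    Nat.factorial_succ t]
  push_cast
  field_simp [Nat.factorial_ne_zero]
  ring

lemma A_ratio (i m : ℕ) (h1 : 1 ≤ i) (h2 : i < m) :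
    (i:ℝ) * (2*(m:ℝ)-1-i) * A (i+1) m = (2*(m:ℝ)-2*i) * A i m := by
  obtain ⟨s, rfl⟩ : ∃ s, i = s + 1 := ⟨i - 1, by omega⟩
  obtain ⟨t, rfl⟩ : ∃ t, m = s + t + 2 := ⟨m - s - 2, by omega⟩
  have e1 : 2*(s+t+2) - (s+2) - 1 = s+2*t+1 := by omega
  have e2 : (s+t+2) - (s+2) = t := by omega
  have e3 : (s+2) - 1 = s+1 := by omega
  have e4 : 2*(s+t+2) - (s+1) - 1 = (s+2*t+1) + 1 := by omega
  have e5 : (s+t+2) - (s+1) = t + 1 := by omega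
  have e6 : (s+1) - 1 = s := by omega
  rw [A, A, e1, e2, e3, e4, e5, e6]
  rw [Nat.factorial_succ (s+2*t+1), Nat.factorial_succ s, Nat.factorial_succ t]
  push_cast
  field_simp [Nat.factorial_ne_zero]
  ring

lemma Icc_split_bot {a b : ℕ} (h : a ≤ b) (f : ℕ → ℝ) :
    ∑ k ∈ Icc a b, f k = f a + ∑ k ∈ Icc (a+1) b, f k := by
  rw [← Finset.Ioc_insert_left h, Finset.sum_insert Finset.left_notMem_Ioc, Finset.Icc_add_one_left_eq_Ioc]

lemma Tlemma (m i : ℕ) (h1 : 1 ≤ i) (h2 : i ≤ m) :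
    ∑ j ∈ Icc i m, ((j.factorial : ℝ)) * A j m
      = ((i-1).factorial : ℝ) * (2*(m:ℝ) - i) * A i m := by
  obtain ⟨s, rfl⟩ : ∃ s, i = s + 1 := ⟨i - 1, by omega⟩
  rcases eq_or_lt_of_le h2 with rfl | hlt
  · rw [Finset.Icc_self, Finset.sum_singleton]
    rw [show s + 1 - 1 = s by omega, Nat.factorial_succ]
    push_cast
    ring
  · have key := Tlemma m (s+2) (by omega) (by omega)
    rw [Icc_split_bot h2]
    rw [key]
    have hr := A_ratio (s+1) m h1 hlt
    rw [show s + 1 + 1 = s + 2 from rfl] at hr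
    rw [show s + 1 - 1 = s by omega, show s + 2 - 1 = s + 1 by omega,
      Nat.factorial_succ s]
    push_cast [Nat.factorial_succ] at hr ⊢
    linear_combination (s.factorial : ℝ) * hr
termination_by m - i

/- ### The cascade identity and the main expansion -/

lemma cascade (j : ℕ) (y : ℝ) :
    y^(j+2) * Heval j y
      = ∑ i ∈ Icc 1 (j+1), ((j.factorial : ℝ)/((i-1).factorial : ℝ)) * y^i * Heval i y := by
  induction j with
  | zero => simp [Heval_zero, Heval_one]; ring
  | succ j ih =>
      have hrec := Heval_rec j y
      have step : y^(j+3) * Heval (j+1) y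
          = y^(j+2) * Heval (j+2) y + ((j:ℝ)+1) * (y^(j+2) * Heval j y) := by
        have : y^(j+3) * Heval (j+1) y = y^(j+2) * (y * Heval (j+1) y) := by ring
        rw [this, hrec]; ring
      rw [step, ih, Finset.mul_sum, Finset.sum_Icc_succ_top (by omega : 1 ≤ j+2)]
      rw [show j + 2 - 1 = j + 1 by omega]
      rw [div_self (by exact_mod_cast (j+1).factorial_ne_zero)]
      rw [add_comm]
      congr 1
      · apply Finset.sum_congr rfl
        intro i hi
        rw [Nat.factorial_succ]
        push_cast
        ring
      · ring

lemma filter_Icc_le (i m : ℕ) (h : 1 ≤ i) :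
    (Icc 1 m).filter (fun j => i ≤ j) = Icc i m := by
  ext k
  simp only [Finset.mem_filter, Finset.mem_Icc]
  omega

lemma mainM (m : ℕ) (y : ℝ) :
    y^(2*(m+1)) = ∑ j ∈ Icc 1 (m+1), A j (m+1) * y^j * Heval j y := by
  induction m with
  | zero => simp [A_one_one, Heval_one]; ring
  | succ m ih =>
      have expand : ∀ j ∈ Icc 1 (m+1), A j (m+1) * y^(j+2) * Heval j y
          = A j (m+1) * y^(j+1) * Heval (j+1) y
            + ∑ i ∈ Icc 1 j, (A j (m+1) * (j.factorial : ℝ) / ((i-1).factorial : ℝ))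
                * y^i * Heval i y := by
        intro j hj
        simp only [Finset.mem_Icc] at hj
        obtain ⟨s, rfl⟩ : ∃ s, j = s + 1 := ⟨j - 1, by omega⟩
        have hrec := Heval_rec s y
        have hc := cascade s y
        have h1 : A (s+1) (m+1) * y^(s+1+2) * Heval (s+1) y
            = A (s+1) (m+1) * (y^(s+1+1) * Heval (s+2) y)
              + (A (s+1) (m+1) * ((s:ℝ)+1)) * (y^(s+2) * Heval s y) := by
          have e : y^(s+1+2) * Heval (s+1) y = y^(s+2) * (y * Heval (s+1) y) := by ring
          rw [mul_assoc, e, hrec]; ring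
        rw [h1, hc, Finset.mul_sum]
        congr 1
        · ring
        · apply Finset.sum_congr rfl
          intro i hi
          rw [Nat.factorial_succ]
          push_cast
          ring
      -- LHS
      have lhs1 : y^(2*(m+2)) = ∑ j ∈ Icc 1 (m+1), A j (m+1) * y^(j+2) * Heval j y := by
        have : y^(2*(m+2)) = y^2 * y^(2*(m+1)) := by ring
        rw [this, ih, Finset.mul_sum]
        apply Finset.sum_congr rfl
        intro j hj
        ring
      rw [lhs1, Finset.sum_congr rfl expand, Finset.sum_add_distrib]
      -- second double sum: swap
      have swap : (∑ j ∈ Icc 1 (m+1), ∑ i ∈ Icc 1 j,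
            (A j (m+1) * (j.factorial : ℝ) / ((i-1).factorial : ℝ)) * y^i * Heval i y)
          = ∑ i ∈ Icc 1 (m+1), (2*((m:ℝ)+1) - i) * A i (m+1) * y^i * Heval i y := by
        have e1 : ∀ j ∈ Icc 1 (m+1), (∑ i ∈ Icc 1 j,
              (A j (m+1) * (j.factorial : ℝ) / ((i-1).factorial : ℝ)) * y^i * Heval i y)
            = ∑ i ∈ Icc 1 (m+1), (if i ≤ j then
                (A j (m+1) * (j.factorial : ℝ) / ((i-1).factorial : ℝ)) * y^i * Heval i y else 0) := by
          intro j hj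
          simp only [Finset.mem_Icc] at hj
          rw [← Finset.sum_filter]
          congr 1
          ext k
          simp only [Finset.mem_filter, Finset.mem_Icc]
          omega
        rw [Finset.sum_congr rfl e1, Finset.sum_comm]
        apply Finset.sum_congr rfl
        intro i hi
        simp only [Finset.mem_Icc] at hi
        rw [← Finset.sum_filter, filter_Icc_le i (m+1) hi.1]
        have e2 : ∀ j ∈ Icc i (m+1),
            (A j (m+1) * (j.factorial : ℝ) / ((i-1).factorial : ℝ)) * y^i * Heval i y
            = ((j.factorial : ℝ) * A j (m+1)) * (y^i * Heval i y / ((i-1).factorial : ℝ)) := by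
          intro j hj; ring
        rw [Finset.sum_congr rfl e2, ← Finset.sum_mul, Tlemma (m+1) i hi.1 hi.2]
        have hfne : ((i-1).factorial : ℝ) ≠ 0 := by exact_mod_cast (i-1).factorial_ne_zero
        push_cast
        field_simp
      rw [swap]
      -- reindex first sum
      have reidx : (∑ j ∈ Icc 1 (m+1), A j (m+1) * y^(j+1) * Heval (j+1) y)
          = ∑ k ∈ Icc 2 (m+2), A (k-1) (m+1) * y^k * Heval k y := by
        rw [show (2:ℕ) = 1 + 1 from rfl, show m+2 = (m+1)+1 from rfl,
          ← Finset.map_add_right_Icc 1 (m+1) 1, Finset.sum_map]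
        apply Finset.sum_congr rfl
        intro j hj
        simp only [addRightEmbedding_apply]
        rw [show j + 1 - 1 = j by omega]
      rw [reidx]
      -- split sums and match coefficients
      rw [Icc_split_bot (by omega : 1 ≤ m+2) (fun k => A k (m+2) * y^k * Heval k y)]
      rw [show (1:ℕ)+1 = 2 from rfl]
      rw [Finset.sum_Icc_succ_top (by omega : 2 ≤ m+2)
        (fun k => A k (m+2) * y^k * Heval k y)]
      rw [Finset.sum_Icc_succ_top (by omega : 2 ≤ m+2)
        (fun k => A (k-1) (m+1) * y^k * Heval k y)]
      rw [Icc_split_bot (by omega : 1 ≤ m+1)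
        (fun i => (2*((m:ℝ)+1) - i) * A i (m+1) * y^i * Heval i y)]
      rw [show (1:ℕ)+1 = 2 from rfl]
      have hmid : ∀ k ∈ Icc 2 (m+1), A k (m+2) * y^k * Heval k y
          = A (k-1) (m+1) * y^k * Heval k y
            + (2*((m:ℝ)+1) - k) * A k (m+1) * y^k * Heval k y := by
        intro k hk
        simp only [Finset.mem_Icc] at hk
        have := A_rec k (m+1) hk.1 hk.2
        rw [show (2*((m:ℝ)+1) - k) = (2*((m+1:ℕ):ℝ) - k) by push_cast; ring, this]
        ring
      have hbot : A 1 (m+2) * y^1 * Heval 1 y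
          = (2*((m:ℝ)+1) - 1) * A 1 (m+1) * y^1 * Heval 1 y := by
        rw [A_rec1 m]; ring
      have htop : A (m+2) (m+2) * y^(m+2) * Heval (m+2) y
          = A (m+2-1) (m+1) * y^(m+2) * Heval (m+2) y := by
        rw [show m+2-1 = m+1 by omega, A_diag (m+1), A_diag m]
      rw [Finset.sum_congr rfl hmid, Finset.sum_add_distrib, hbot, htop]
      push_cast
      ring

/- ### Relating `ccoef` to `A` -/

lemma ccoef_diag (m : ℕ) : ccoef (m+1) (m+1) = -(2^m / (m.factorial : ℝ)) := by
  induction m with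
  | zero => simp [ccoef]
  | succ m ih =>
      show (if m+2 < m+2 then _ else 0)
          + (if 1 < m+2 then (2 / ((m:ℝ)+1)) * ccoef (m+1) (m+2-1) else 0) = _
      rw [if_neg (by omega), if_pos (by omega), show m+2-1 = m+1 by omega, ih]
      rw [Nat.factorial_succ]
      push_cast
      have : ((m:ℝ)+1) ≠ 0 := by positivity
      field_simp
      ring

lemma ccoef_diag_ne (m : ℕ) : ccoef (m+1) (m+1) ≠ 0 := by
  rw [ccoef_diag]
  have h1 : (0:ℝ) < 2^m / (m.factorial : ℝ) := by
    apply div_pos (by positivity)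
    exact_mod_cast m.factorial_pos
  intro h
  rw [neg_eq_zero] at h
  exact absurd h (ne_of_gt h1)

lemma C2 (m : ℕ) : ∀ j, 1 ≤ j → j ≤ m+1 →
    ccoef (m+1) j = (-1:ℝ)^(m+1+j) * A j (m+1) * ccoef (m+1) (m+1) := by
  induction m with
  | zero =>
      intro j h1 h2
      have : j = 1 := by omega
      subst this
      rw [A_one_one]
      norm_num
  | succ m ih =>
      intro j h1 h2
      have hdiag : ccoef (m+2) (m+2) = (2 / ((m:ℝ)+1)) * ccoef (m+1) (m+1) := by
        show (if m+2 < m+2 then _ else 0)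
            + (if 1 < m+2 then (2 / ((m:ℝ)+1)) * ccoef (m+1) (m+2-1) else 0) = _
        rw [if_neg (by omega), if_pos (by omega), show m+2-1 = m+1 by omega, zero_add]
      rcases eq_or_lt_of_le h2 with rfl | hlt
      · rw [A_diag]
        have : (-1:ℝ)^(m+2+(m+2)) = 1 := by
          rw [show m+2+(m+2) = 2*(m+2) from by ring, pow_mul]
          norm_num
        rw [this]; ring
      · have hj : j ≤ m + 1 := by omega
        show (if j < m+2 then (2 * (j:ℝ) / ((m:ℝ)+1) - 4) * ccoef (m+1) j else 0)
          + (if 1 < j then (2 / ((m:ℝ)+1)) * ccoef (m+1) (j-1) else 0)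
          = (-1:ℝ)^(m+2+j) * A j (m+2) * ccoef (m+2) (m+2)
        rw [if_pos (by omega), hdiag]
        rcases eq_or_lt_of_le h1 with rfl | hj2
        · rw [if_neg (by omega), add_zero, ih 1 le_rfl (by omega)]
          rw [show A 1 (m+2) = (2*(m:ℝ)+1) * A 1 (m+1) from A_rec1 m]
          have hm1 : ((m:ℝ)+1) ≠ 0 := by positivity
          have hsign : (-1:ℝ)^(m+2+1) = -(-1:ℝ)^(m+1+1) := by
            rw [show m+2+1 = (m+1+1)+1 from rfl, pow_succ]; ring
          rw [hsign]
          field_simp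
          ring
        · rw [if_pos hj2, ih j h1 hj, ih (j-1) (by omega) (by omega)]
          rw [A_rec j (m+1) hj2 hj]
          have hm1 : ((m:ℝ)+1) ≠ 0 := by positivity
          have hs1 : (-1:ℝ)^(m+1+j) = -(-1:ℝ)^(m+2+j) := by
            rw [show m+2+j = (m+1+j)+1 from by omega, pow_succ]; ring
          have hs2 : (-1:ℝ)^(m+1+(j-1)) = (-1:ℝ)^(m+2+j) := by
            obtain ⟨s, rfl⟩ : ∃ s, j = s + 2 := ⟨j - 2, by omega⟩
            rw [show m+1+(s+2-1) = m+s+2 from by omega, show m+2+(s+2) = (m+s+2)+2 from by omega,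
              pow_succ, pow_succ]
            ring
          rw [hs1, hs2]
          have hcast : (2*((m:ℝ)+1) - j) = (2*((m+1:ℕ):ℝ) - j) := by push_cast; ring
          field_simp
          push_cast; ring

/-- With `H_j` the Hermite polynomials defined by `η^{(j)}(y) = (-1)^j H_j(y) η(y)`, one has
`y^{2m} = ∑_{j=1}^m (-1)^{m+j} (c_{j,m}/c_{m,m}) y^j H_j(y)` for all `m ≥ 1` and `y ∈ ℝ`. -/
theorem stmt2 (H : ℕ → ℝ → ℝ)
    (hH : ∀ (j : ℕ) (y : ℝ),
      iteratedDeriv j gaussDensity y = (-1 : ℝ) ^ j * H j y * gaussDensity y)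
    (m : ℕ) (hm : 1 ≤ m) (y : ℝ) :
    y ^ (2 * m) =
      ∑ j ∈ Finset.Icc 1 m,
        (-1 : ℝ) ^ (m + j) * (ccoef m j / ccoef m m) * y ^ j * H j y := by
  obtain ⟨n, rfl⟩ : ∃ n, m = n + 1 := ⟨m - 1, by omega⟩
  have hne := ccoef_diag_ne n
  have key : ∀ j ∈ Finset.Icc 1 (n+1),
      (-1 : ℝ) ^ (n+1+j) * (ccoef (n+1) j / ccoef (n+1) (n+1)) * y ^ j * H j y
        = A j (n+1) * y^j * Heval j y := by
    intro j hj
    simp only [Finset.mem_Icc] at hj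
    rw [H_eq H hH j y, C2 n j hj.1 hj.2,
      mul_div_cancel_right₀ _ hne]
    have h2 : (-1:ℝ)^(n+1+j) * (-1:ℝ)^(n+1+j) = 1 := by
      rw [← pow_add]
      exact Even.neg_one_pow ⟨n+1+j, rfl⟩
    linear_combination (A j (n+1) * y ^ j * Heval j y) * h2
  rw [Finset.sum_congr rfl key]
  exact mainM n y
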